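/- arXiv:1512.07701 — 3 statements merged into one kernel-verified Lean document; each statement's English description precedes it below -/
import Mathlib

section
/- If a ∉ ℤ, then the Witt algebra module 𝒜_{a,b} is irreducible, i.e., it has no nonzero proper submodule. -/
/-- The action of the Witt-algebra generator `d_m` on the module
`𝒜_{a,b} = ⊕_{i∈ℤ} ℂ vᵢ` (encoded as `ℤ →₀ ℂ`, with `vᵢ = single i 1`):
`d_m · vᵢ = (a + i + b m) v_{m+i}`, extended linearly. -/
noncomputable def dAct (a b : ℂ) (m : ℤ) (v : ℤ →₀ ℂ) : ℤ →₀ ℂ :=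
  v.sum fun i c => Finsupp.single (m + i) ((a + (i : ℂ) + b * (m : ℂ)) * c)

lemma dAct_single (a b : ℂ) (m i : ℤ) (c : ℂ) :
    dAct a b m (Finsupp.single i c) = Finsupp.single (m + i) ((a + i + b * m) * c) := by
  unfold dAct
  rw [Finsupp.sum_single_index]
  simp

lemma dAct_zero_apply (a b : ℂ) (v : ℤ →₀ ℂ) (j : ℤ) :
    dAct a b 0 v j = (a + (j : ℂ)) * v j := by
  unfold dAct
  rw [Finsupp.sum_apply, Finsupp.sum]
  simp only [zero_add, Finsupp.single_apply, Int.cast_zero, mul_zero, add_zero]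
  rw [Finset.sum_ite_eq' v.support j (fun i => (a + (i:ℂ)) * v i)]
  by_cases h : j ∈ v.support
  · simp [h]
  · simp [h, Finsupp.notMem_support_iff.mp h]

lemma components_mem (a b : ℂ) (U : Submodule ℂ (ℤ →₀ ℂ))
    (hU : ∀ v ∈ U, dAct a b 0 v ∈ U) :
    ∀ n : ℕ, ∀ v ∈ U, v.support.card = n → ∀ i, Finsupp.single i (v i) ∈ U := by
  intro n
  induction n using Nat.strong_induction_on with
  | _ n ih =>
    intro v hv hcard i
    by_cases hi : i ∈ v.support
    · set w := dAct a b 0 v - (a + (i : ℂ)) • v with hw_def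
      have hw : w ∈ U := U.sub_mem (hU v hv) (U.smul_mem _ hv)
      have hwapp : ∀ j : ℤ, w j = ((j : ℂ) - (i : ℂ)) * v j := by
        intro j
        simp only [hw_def, Finsupp.sub_apply, Finsupp.smul_apply, dAct_zero_apply,
          smul_eq_mul]
        ring
      have hsupp : w.support ⊆ v.support.erase i := by
        intro j hj
        rw [Finsupp.mem_support_iff, hwapp] at hj
        rcases mul_ne_zero_iff.mp hj with ⟨h1, h2⟩
        refine Finset.mem_erase.mpr ⟨?_, Finsupp.mem_support_iff.mpr h2⟩
        intro h; apply h1; rw [h]; ring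
      have hcard' : w.support.card < n := by
        calc w.support.card ≤ (v.support.erase i).card := Finset.card_le_card hsupp
        _ < v.support.card := Finset.card_erase_lt_of_mem hi
        _ = n := hcard
      have hcomp : ∀ j, Finsupp.single j (w j) ∈ U :=
        fun j => ih w.support.card hcard' w hw rfl j
      have hvj : ∀ j : ℤ, j ≠ i → Finsupp.single j (v j) ∈ U := by
        intro j hj
        have hne : ((j : ℂ) - (i : ℂ)) ≠ 0 := by
          intro h
          apply hj
          exact_mod_cast sub_eq_zero.mp h
        have := U.smul_mem (((j : ℂ) - (i : ℂ))⁻¹) (hcomp j)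
        rwa [hwapp, Finsupp.smul_single, smul_eq_mul, ← mul_assoc,
          inv_mul_cancel₀ hne, one_mul] at this
      have hdecomp : Finsupp.single i (v i)
          = v - ∑ j ∈ v.support.erase i, Finsupp.single j (v j) := by
        have hv' : (Finsupp.single i (v i)
            + ∑ j ∈ v.support.erase i, Finsupp.single j (v j)) = v := by
          rw [Finset.add_sum_erase v.support (fun j => Finsupp.single j (v j)) hi]
          exact Finsupp.sum_single v
        exact eq_sub_of_add_eq hv'
      rw [hdecomp]
      exact U.sub_mem hv (Submodule.sum_mem U (fun j hj =>
        hvj j (Finset.mem_erase.mp hj).1))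
    · rw [Finsupp.notMem_support_iff.mp hi, Finsupp.single_zero]
      exact U.zero_mem

lemma good_m (a b : ℂ) (ha : ∀ n : ℤ, a ≠ (n : ℂ)) (i j : ℤ) :
    ∃ m : ℤ, (a + (i:ℂ) + b * m) ≠ 0 ∧
      (a + ((m + i : ℤ):ℂ) + b * ((j - i - m : ℤ):ℂ)) ≠ 0 := by
  by_contra h
  push_neg at h
  have hf : ∀ m₁ m₂ : ℤ, m₁ ≠ m₂ → (a + (i:ℂ) + b * m₁) = 0 →
      (a + (i:ℂ) + b * m₂) = 0 → False := by
    intro m₁ m₂ hne h1 h2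
    have hb : b = 0 := by
      have h3 : b * ((m₁ : ℂ) - m₂) = 0 := by linear_combination h1 - h2
      rcases mul_eq_zero.mp h3 with h | h
      · exact h
      · exact absurd (by exact_mod_cast sub_eq_zero.mp h) hne
    rw [hb] at h1
    exact ha (-i) (by push_cast; linear_combination h1)
  have hg : ∀ m₁ m₂ : ℤ, m₁ ≠ m₂ →
      (a + ((m₁ + i : ℤ):ℂ) + b * ((j - i - m₁ : ℤ):ℂ)) = 0 →
      (a + ((m₂ + i : ℤ):ℂ) + b * ((j - i - m₂ : ℤ):ℂ)) = 0 → False := by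
    intro m₁ m₂ hne h1 h2
    push_cast at h1 h2
    have hb : b = 1 := by
      have h3 : (1 - b) * ((m₁ : ℂ) - m₂) = 0 := by linear_combination h1 - h2
      rcases mul_eq_zero.mp h3 with h | h
      · linear_combination -h
      · exact absurd (by exact_mod_cast sub_eq_zero.mp h) hne
    rw [hb] at h1
    exact ha (-j) (by push_cast; linear_combination h1)
  replace h : ∀ m : ℤ, (a + (i:ℂ) + b * m) = 0 ∨
      (a + ((m + i : ℤ):ℂ) + b * ((j - i - m : ℤ):ℂ)) = 0 :=
    fun m => or_iff_not_imp_left.mpr (h m)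
  rcases h 0 with h0 | h0 <;> rcases h 1 with h1 | h1 <;> rcases h 2 with h2 | h2
  · exact hf 0 1 (by norm_num) h0 h1
  · exact hf 0 1 (by norm_num) h0 h1
  · exact hf 0 2 (by norm_num) h0 h2
  · exact hg 1 2 (by norm_num) h1 h2
  · exact hf 1 2 (by norm_num) h1 h2
  · exact hg 0 2 (by norm_num) h0 h2
  · exact hg 0 1 (by norm_num) h0 h1
  · exact hg 0 1 (by norm_num) h0 h1

lemma single_one_step (a b : ℂ) (U : Submodule ℂ (ℤ →₀ ℂ))
    (hU : ∀ m : ℤ, ∀ v ∈ U, dAct a b m v ∈ U) (i m : ℤ)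
    (hc : (a + (i:ℂ) + b * m) ≠ 0) (h : Finsupp.single i (1:ℂ) ∈ U) :
    Finsupp.single (m + i) (1:ℂ) ∈ U := by
  have h1 := hU m _ h
  rw [dAct_single] at h1
  have h2 := U.smul_mem ((a + (i:ℂ) + b * m)⁻¹) h1
  rwa [Finsupp.smul_single, smul_eq_mul, mul_one, inv_mul_cancel₀ hc] at h2

lemma single_one_all (a b : ℂ) (ha : ∀ n : ℤ, a ≠ (n : ℂ)) (U : Submodule ℂ (ℤ →₀ ℂ))
    (hU : ∀ m : ℤ, ∀ v ∈ U, dAct a b m v ∈ U) (i : ℤ)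
    (h : Finsupp.single i (1:ℂ) ∈ U) : ∀ j : ℤ, Finsupp.single j (1:ℂ) ∈ U := by
  intro j
  obtain ⟨m, hm1, hm2⟩ := good_m a b ha i j
  have step1 : Finsupp.single (m + i) (1:ℂ) ∈ U := single_one_step a b U hU i m hm1 h
  have step2 : Finsupp.single ((j - i - m) + (m + i)) (1:ℂ) ∈ U := by
    refine single_one_step a b U hU (m + i) (j - i - m) ?_ step1
    push_cast
    push_cast at hm2
    convert hm2 using 2
  have : (j - i - m) + (m + i) = j := by ring
  rwa [this] at step2

/-- if `a ∉ ℤ`, then the Witt module `𝒜_{a,b}` is irreducible: every subspace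
invariant under all the operators `d_m` is `⊥` or `⊤`. -/
theorem Aab_irreducible_of_not_int (a b : ℂ) (ha : ∀ n : ℤ, a ≠ (n : ℂ)) :
    ∀ U : Submodule ℂ (ℤ →₀ ℂ),
      (∀ m : ℤ, ∀ v ∈ U, dAct a b m v ∈ U) → U = ⊥ ∨ U = ⊤ := by
  intro U hU
  by_cases hbot : U = ⊥
  · exact Or.inl hbot
  right
  obtain ⟨v, hv, hv0⟩ := Submodule.exists_mem_ne_zero_of_ne_bot hbot
  obtain ⟨i, hi⟩ : ∃ i, v i ≠ 0 := by
    by_contra h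
    push_neg at h
    exact hv0 (Finsupp.ext h)
  have hsingle : Finsupp.single i (v i) ∈ U :=
    components_mem a b U (fun w hw => hU 0 w hw) v.support.card v hv rfl i
  have hone : Finsupp.single i (1:ℂ) ∈ U := by
    have := U.smul_mem ((v i)⁻¹) hsingle
    rwa [Finsupp.smul_single, smul_eq_mul, inv_mul_cancel₀ hi] at this
  have hall := single_one_all a b ha U hU i hone
  rw [Submodule.eq_top_iff']
  intro w
  have hdecomp : w = ∑ j ∈ w.support, (w j) • Finsupp.single j (1:ℂ) := by
    conv_lhs => rw [← Finsupp.sum_single w]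
    rw [Finsupp.sum]
    refine Finset.sum_congr rfl (fun j _ => ?_)
    rw [Finsupp.smul_single, smul_eq_mul, mul_one]
  rw [hdecomp]
  exact Submodule.sum_mem U (fun j _ => U.smul_mem _ (hall j))
end

section
/- Let M be a finite-dimensional sl₂-module and a, b ∈ ℂ. Then the formulas d_m(u ⊗ t^i) = (a + bm + i) u ⊗ t^{m+i}, x_m(u ⊗ t^i) = (x·u) ⊗ t^{m+i} for x ∈ {e,f,h}, and C = 0, define a module structure over the affine-Virasoro algebra 𝓛 of type A_1 on M ⊗ ℂ[t,t⁻¹]. -/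
/-- Basis index set for the affine-Virasoro algebra of type A₁:
`E i, F i, H i, D i` for `i ∈ ℤ`, and a central element `C`. -/
inductive AVB : Type
  | E : ℤ → AVB
  | F : ℤ → AVB
  | H : ℤ → AVB
  | D : ℤ → AVB
  | C : AVB

/-- The underlying vector space of the affine-Virasoro algebra of type A₁. -/
abbrev AV : Type := AVB →₀ ℂ

/-- The basis vector corresponding to a basis index. -/
noncomputable def sgl (b : AVB) : AV := Finsupp.single b 1

open AVB in
/-- The bracket on basis elements. -/
noncomputable def avbBr : AVB → AVB → AV
  | E i, F j => sgl (H (i+j)) + (if i + j = 0 then (i:ℂ) • sgl C else 0)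
  | F j, E i => -(sgl (H (i+j)) + (if i + j = 0 then (i:ℂ) • sgl C else 0))
  | H i, E j => (2:ℂ) • sgl (E (i+j))
  | E j, H i => -((2:ℂ) • sgl (E (i+j)))
  | H i, F j => -((2:ℂ) • sgl (F (i+j)))
  | F j, H i => (2:ℂ) • sgl (F (i+j))
  | H i, H j => if i + j = 0 then ((2*i : ℤ) : ℂ) • sgl C else 0
  | D i, D j => ((j:ℂ) - (i:ℂ)) • sgl (D (i+j))
      + (if i + j = 0 then ((((j:ℂ))^3 - (j:ℂ))/12) • sgl C else 0)
  | D i, E j => (j:ℂ) • sgl (E (i+j))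
  | E j, D i => -((j:ℂ) • sgl (E (i+j)))
  | D i, F j => (j:ℂ) • sgl (F (i+j))
  | F j, D i => -((j:ℂ) • sgl (F (i+j)))
  | D i, H j => (j:ℂ) • sgl (H (i+j))
  | H j, D i => -((j:ℂ) • sgl (H (i+j)))
  | E _, E _ => 0
  | F _, F _ => 0
  | C, _ => 0
  | _, C => 0

/-- The bilinear extension of the bracket to the whole space. -/
noncomputable def avBr (x y : AV) : AV :=
  x.sum fun a ca => y.sum fun b cb => (ca * cb) • avbBr a b

variable {M : Type*} [AddCommGroup M] [Module ℂ M]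

/-- The action of the basis elements of the affine-Virasoro algebra `𝓛` of type A₁ on
`L(M) = M ⊗ ℂ[t,t⁻¹]` (encoded as `ℤ →₀ M`, with `u ⊗ tⁱ = single i u`):
`d_m (u⊗tⁱ) = (a + bm + i) u⊗t^{m+i}`, `x_m (u⊗tⁱ) = (x·u)⊗t^{m+i}` for `x ∈ {e,f,h}`,
and `C = 0`; here the `sl₂`-module structure on `M` is given by endomorphisms `E F H`. -/
noncomputable def lAct (a b : ℂ) (E F H : Module.End ℂ M) :
    AVB → (ℤ →₀ M) → (ℤ →₀ M)
  | AVB.D m, v => v.sum fun i u => Finsupp.single (m + i) ((a + b * (m : ℂ) + (i : ℂ)) • u)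
  | AVB.E m, v => v.sum fun i u => Finsupp.single (m + i) (E u)
  | AVB.F m, v => v.sum fun i u => Finsupp.single (m + i) (F u)
  | AVB.H m, v => v.sum fun i u => Finsupp.single (m + i) (H u)
  | AVB.C, _ => 0

/-- The linear extension of `lAct` to the whole of `𝓛`. -/
noncomputable def lExt (a b : ℂ) (E F H : Module.End ℂ M) (x : AV) (w : ℤ →₀ M) :
    ℤ →₀ M :=
  x.sum fun bIdx c => c • lAct a b E F H bIdx w


section Helpers

variable (a b : ℂ) (E F H : Module.End ℂ M)

lemma lAct_C (w : ℤ →₀ M) : lAct a b E F H AVB.C w = 0 := rfl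

lemma lAct_E_single (m j : ℤ) (u : M) :
    lAct a b E F H (AVB.E m) (Finsupp.single j u) = Finsupp.single (m + j) (E u) := by
  simp only [lAct]
  rw [Finsupp.sum_single_index (by simp)]

lemma lAct_F_single (m j : ℤ) (u : M) :
    lAct a b E F H (AVB.F m) (Finsupp.single j u) = Finsupp.single (m + j) (F u) := by
  simp only [lAct]
  rw [Finsupp.sum_single_index (by simp)]

lemma lAct_H_single (m j : ℤ) (u : M) :
    lAct a b E F H (AVB.H m) (Finsupp.single j u) = Finsupp.single (m + j) (H u) := by
  simp only [lAct]
  rw [Finsupp.sum_single_index (by simp)]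

lemma lAct_D_single (m j : ℤ) (u : M) :
    lAct a b E F H (AVB.D m) (Finsupp.single j u)
      = Finsupp.single (m + j) ((a + b * (m : ℂ) + (j : ℂ)) • u) := by
  simp only [lAct]
  rw [Finsupp.sum_single_index (by simp)]

lemma sumlin (m : ℤ) (g : ℤ → M →ₗ[ℂ] M) :
    IsLinearMap ℂ (fun v : ℤ →₀ M => v.sum fun i u => Finsupp.single (m + i) (g i u)) := by
  constructor
  · intro v w
    rw [Finsupp.sum_add_index' (fun i => by simp) (fun i u₁ u₂ => by simp [Finsupp.single_add])]
  · intro c v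
    have h0 : ∀ i : ℤ, Finsupp.single (m + i) (g i 0) = 0 := fun i => by simp
    rw [Finsupp.sum_smul_index' h0, Finsupp.smul_sum]
    simp [Finsupp.smul_single]

lemma lAct_lin (x : AVB) : IsLinearMap ℂ (lAct a b E F H x) := by
  cases x with
  | E m => exact sumlin m (fun _ => E)
  | F m => exact sumlin m (fun _ => F)
  | H m => exact sumlin m (fun _ => H)
  | D m => exact sumlin m (fun i => (a + b * (m : ℂ) + (i : ℂ)) • (LinearMap.id : M →ₗ[ℂ] M))
  | C => exact ⟨fun _ _ => by simp [lAct_C], fun _ _ => by simp [lAct_C]⟩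

lemma lAct_add (x : AVB) (v w : ℤ →₀ M) :
    lAct a b E F H x (v + w) = lAct a b E F H x v + lAct a b E F H x w :=
  (lAct_lin a b E F H x).map_add v w

lemma lAct_zero (x : AVB) : lAct a b E F H x 0 = 0 :=
  (lAct_lin a b E F H x).map_zero

lemma lExt_zero_w (z : AV) : lExt a b E F H z 0 = 0 := by
  simp [lExt, lAct_zero]

lemma lExt_add_w (z : AV) (v w : ℤ →₀ M) :
    lExt a b E F H z (v + w) = lExt a b E F H z v + lExt a b E F H z w := by
  simp only [lExt, lAct_add, smul_add, Finsupp.sum_add]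

lemma lExt_sgl (x : AVB) (w : ℤ →₀ M) :
    lExt a b E F H (sgl x) w = lAct a b E F H x w := by
  rw [lExt, sgl, Finsupp.sum_single_index (by simp)]
  simp

lemma lExt_zeroz (w : ℤ →₀ M) : lExt a b E F H 0 w = 0 := by
  simp [lExt]

lemma lExt_addz (z₁ z₂ : AV) (w : ℤ →₀ M) :
    lExt a b E F H (z₁ + z₂) w = lExt a b E F H z₁ w + lExt a b E F H z₂ w := by
  rw [lExt, lExt, lExt,
    Finsupp.sum_add_index' (fun i => by simp) (fun i c₁ c₂ => by simp [add_smul])]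

lemma lExt_smulz (c : ℂ) (z : AV) (w : ℤ →₀ M) :
    lExt a b E F H (c • z) w = c • lExt a b E F H z w := by
  rw [lExt, lExt, Finsupp.sum_smul_index' (fun i => by simp), Finsupp.smul_sum]
  simp [mul_smul]

lemma lExt_negz (z : AV) (w : ℤ →₀ M) :
    lExt a b E F H (-z) w = -lExt a b E F H z w := by
  rw [← neg_one_smul ℂ z, lExt_smulz]
  simp

lemma lExt_ifC (P : Prop) [Decidable P] (c : ℂ) (w : ℤ →₀ M) :
    lExt a b E F H (if P then c • sgl AVB.C else 0) w = 0 := by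
  split_ifs
  · rw [lExt_smulz, lExt_sgl, lAct_C, smul_zero]
  · exact lExt_zeroz a b E F H w

end Helpers

/-- for a finite-dimensional `sl₂`-module `M` and `a, b ∈ ℂ`, the formulas
`d_m(u⊗tⁱ) = (a+bm+i) u⊗t^{m+i}`, `x_m(u⊗tⁱ) = (x·u)⊗t^{m+i}` (`x ∈ {e,f,h}`), `C = 0`
define an `𝓛`-module structure on `M ⊗ ℂ[t,t⁻¹]`: each operator is linear and the
operators represent the bracket of `𝓛`. -/
theorem LM_is_module (M : Type*) [AddCommGroup M] [Module ℂ M] [FiniteDimensional ℂ M]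
    (E F H : Module.End ℂ M)
    (hHE : H * E - E * H = (2 : ℂ) • E)
    (hHF : H * F - F * H = -((2 : ℂ) • F))
    (hEF : E * F - F * E = H)
    (a b : ℂ) :
    (∀ x : AVB, IsLinearMap ℂ (lAct a b E F H x)) ∧
    (∀ x y : AVB, ∀ w : ℤ →₀ M,
      lExt a b E F H (avbBr x y) w
        = lAct a b E F H x (lAct a b E F H y w) - lAct a b E F H y (lAct a b E F H x w)) := by
  have hEF' : ∀ u : M, E (F u) - F (E u) = H u := fun u => by
    simpa using DFunLike.congr_fun hEF u
  have hHE' : ∀ u : M, H (E u) - E (H u) = (2 : ℂ) • E u := fun u => by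
    simpa using DFunLike.congr_fun hHE u
  have hHF' : ∀ u : M, H (F u) - F (H u) = -((2 : ℂ) • F u) := fun u => by
    simpa using DFunLike.congr_fun hHF u
  refine ⟨lAct_lin a b E F H, fun x y w => ?_⟩
  induction w using Finsupp.induction_linear with
  | zero => simp only [lExt_zero_w, lAct_zero, sub_zero]
  | add f g hf hg =>
      simp only [lExt_add_w, lAct_add]
      rw [hf, hg]; abel
  | single j u =>
      rcases x with m|m|m|m|_ <;> rcases y with n|n|n|n|_ <;>
        simp only [avbBr, lExt_addz, lExt_negz, lExt_smulz, lExt_sgl, lExt_zeroz, lExt_ifC,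
          lAct_E_single, lAct_F_single, lAct_H_single, lAct_D_single, lAct_C, add_zero,
          map_smul, smul_smul, lAct_zero, sub_zero, zero_sub, neg_zero, map_zero,
          Finsupp.single_zero, smul_zero]
      -- E E
      · have k1 : m + (n + j) = m + n + j := by ring
        have k2 : n + (m + j) = m + n + j := by ring
        have k3 : n + m + j = m + n + j := by ring
        simp only [k1, k2, k3, Finsupp.smul_single, ← Finsupp.single_neg,
          ← Finsupp.single_sub]
        simp
      -- E F
      · have k1 : m + (n + j) = m + n + j := by ring
        have k2 : n + (m + j) = m + n + j := by ring
        have k3 : n + m + j = m + n + j := by ring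
        simp only [k1, k2, k3, Finsupp.smul_single, ← Finsupp.single_neg,
          ← Finsupp.single_sub]
        congr 1
        exact (hEF' u).symm
      -- E H
      · have k1 : m + (n + j) = m + n + j := by ring
        have k2 : n + (m + j) = m + n + j := by ring
        have k3 : n + m + j = m + n + j := by ring
        simp only [k1, k2, k3, Finsupp.smul_single, ← Finsupp.single_neg,
          ← Finsupp.single_sub]
        congr 1
        rw [← hHE' u]; abel
      -- E D
      · have k1 : m + (n + j) = m + n + j := by ring
        have k2 : n + (m + j) = m + n + j := by ring
        have k3 : n + m + j = m + n + j := by ring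
        simp only [k1, k2, k3, Finsupp.smul_single, ← Finsupp.single_neg,
          ← Finsupp.single_sub]
        congr 1
        push_cast
        module
      -- F E
      · have k1 : m + (n + j) = m + n + j := by ring
        have k2 : n + (m + j) = m + n + j := by ring
        have k3 : n + m + j = m + n + j := by ring
        simp only [k1, k2, k3, Finsupp.smul_single, ← Finsupp.single_neg,
          ← Finsupp.single_sub]
        congr 1
        rw [← hEF' u]; abel
      -- F F
      · have k1 : m + (n + j) = m + n + j := by ring
        have k2 : n + (m + j) = m + n + j := by ring
        have k3 : n + m + j = m + n + j := by ring
        simp only [k1, k2, k3, Finsupp.smul_single, ← Finsupp.single_neg,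
          ← Finsupp.single_sub]
        simp
      -- F H
      · have k1 : m + (n + j) = m + n + j := by ring
        have k2 : n + (m + j) = m + n + j := by ring
        have k3 : n + m + j = m + n + j := by ring
        simp only [k1, k2, k3, Finsupp.smul_single, ← Finsupp.single_neg,
          ← Finsupp.single_sub]
        congr 1
        rw [← neg_sub, hHF' u, neg_neg]
      -- F D
      · have k1 : m + (n + j) = m + n + j := by ring
        have k2 : n + (m + j) = m + n + j := by ring
        have k3 : n + m + j = m + n + j := by ring
        simp only [k1, k2, k3, Finsupp.smul_single, ← Finsupp.single_neg,
          ← Finsupp.single_sub]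
        congr 1
        push_cast
        module
      -- H E
      · have k1 : m + (n + j) = m + n + j := by ring
        have k2 : n + (m + j) = m + n + j := by ring
        have k3 : n + m + j = m + n + j := by ring
        simp only [k1, k2, k3, Finsupp.smul_single, ← Finsupp.single_neg,
          ← Finsupp.single_sub]
        congr 1
        exact (hHE' u).symm
      -- H F
      · have k1 : m + (n + j) = m + n + j := by ring
        have k2 : n + (m + j) = m + n + j := by ring
        have k3 : n + m + j = m + n + j := by ring
        simp only [k1, k2, k3, Finsupp.smul_single, ← Finsupp.single_neg,
          ← Finsupp.single_sub]
        congr 1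
        exact (hHF' u).symm
      -- H H
      · have k1 : m + (n + j) = m + n + j := by ring
        have k2 : n + (m + j) = m + n + j := by ring
        have k3 : n + m + j = m + n + j := by ring
        simp only [k1, k2, k3, Finsupp.smul_single, ← Finsupp.single_neg,
          ← Finsupp.single_sub]
        simp
      -- H D
      · have k1 : m + (n + j) = m + n + j := by ring
        have k2 : n + (m + j) = m + n + j := by ring
        have k3 : n + m + j = m + n + j := by ring
        simp only [k1, k2, k3, Finsupp.smul_single, ← Finsupp.single_neg,
          ← Finsupp.single_sub]
        congr 1
        push_cast
        module
      -- D E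
      · have k1 : m + (n + j) = m + n + j := by ring
        have k2 : n + (m + j) = m + n + j := by ring
        have k3 : n + m + j = m + n + j := by ring
        simp only [k1, k2, k3, Finsupp.smul_single, ← Finsupp.single_neg,
          ← Finsupp.single_sub]
        congr 1
        push_cast
        module
      -- D F
      · have k1 : m + (n + j) = m + n + j := by ring
        have k2 : n + (m + j) = m + n + j := by ring
        have k3 : n + m + j = m + n + j := by ring
        simp only [k1, k2, k3, Finsupp.smul_single, ← Finsupp.single_neg,
          ← Finsupp.single_sub]
        congr 1
        push_cast
        module
      -- D H
      · have k1 : m + (n + j) = m + n + j := by ring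
        have k2 : n + (m + j) = m + n + j := by ring
        have k3 : n + m + j = m + n + j := by ring
        simp only [k1, k2, k3, Finsupp.smul_single, ← Finsupp.single_neg,
          ← Finsupp.single_sub]
        congr 1
        push_cast
        module
      -- D D
      · have k1 : m + (n + j) = m + n + j := by ring
        have k2 : n + (m + j) = m + n + j := by ring
        have k3 : n + m + j = m + n + j := by ring
        simp only [k1, k2, k3, Finsupp.smul_single, ← Finsupp.single_neg,
          ← Finsupp.single_sub]
        congr 1
        push_cast
        module
end

section
/- If M is a nontrivial finite-dimensional irreducible sl₂-module, then the 𝓛-module L(M) = M ⊗ ℂ[t,t⁻¹] with action d_m(u⊗t^i) = (a+bm+i)u⊗t^{m+i}, x_m(u⊗t^i) = (x·u)⊗t^{m+i}, C=0 is irreducible for any a, b ∈ ℂ. -/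
variable {M : Type*} [AddCommGroup M] [Module ℂ M]

/-- if `M` is a nontrivial (dimension ≥ 2) finite-dimensional irreducible
`sl₂`-module, then the `𝓛`-module `L(M) = M ⊗ ℂ[t,t⁻¹]` is irreducible for any `a, b ∈ ℂ`. -/
theorem LM_irreducible (M : Type*) [AddCommGroup M] [Module ℂ M] [FiniteDimensional ℂ M]
    (E F H : Module.End ℂ M)
    (hHE : H * E - E * H = (2 : ℂ) • E)
    (hHF : H * F - F * H = -((2 : ℂ) • F))
    (hEF : E * F - F * E = H)
    (hirr : ∀ W : Submodule ℂ M,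
      (∀ u ∈ W, E u ∈ W ∧ F u ∈ W ∧ H u ∈ W) → W = ⊥ ∨ W = ⊤)
    (hnontriv : 2 ≤ Module.finrank ℂ M)
    (a b : ℂ) :
    ∀ U : Submodule ℂ (ℤ →₀ M),
      (∀ x : AVB, ∀ w ∈ U, lAct a b E F H x w ∈ U) → U = ⊥ ∨ U = ⊤ := by
  intro U hU
  by_cases hbot : U = ⊥
  · exact Or.inl hbot
  right
  -- value of the action of d₀
  have hD0 : ∀ (w : ℤ →₀ M) (k : ℤ),
      (lAct a b E F H (AVB.D 0) w) k = (a + (k : ℂ)) • (w k) := by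
    intro w k
    simp only [lAct]
    rw [Finsupp.sum_apply]
    have : (w.sum fun i u => (Finsupp.single ((0:ℤ) + i)
        ((a + b * ((0:ℤ) : ℂ) + (i : ℂ)) • u)) k)
        = w.sum fun i u => if i = k then (a + (i : ℂ)) • u else 0 := by
      apply Finsupp.sum_congr
      intro i _
      simp [Finsupp.single_apply]
    rw [this, Finsupp.sum_ite_eq' w k (fun i u => (a + (i : ℂ)) • u)]
    split_ifs with h
    · rfl
    · rw [Finsupp.notMem_support_iff.mp h, smul_zero]
  -- extracting components
  have comp : ∀ (n : ℕ) (w : ℤ →₀ M), w ∈ U → w.support.card ≤ n →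
      ∀ i, Finsupp.single i (w i) ∈ U := by
    intro n
    induction n with
    | zero =>
      intro w hw hc i
      have hw0 : w = 0 := Finsupp.support_eq_empty.mp
        (Finset.card_eq_zero.mp (le_antisymm hc (Nat.zero_le _)))
      simp [hw0]
    | succ n ih =>
      intro w hw hc i
      by_cases hi : w i = 0
      · simp [hi]
      by_cases hsub : w.support ⊆ {i}
      · have : w = Finsupp.single i (w i) :=
          (Finsupp.support_subset_singleton.mp hsub)
        rw [← this]; exact hw
      · obtain ⟨j, hjs, hji⟩ : ∃ j ∈ w.support, j ≠ i := by
          by_contra h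
          push_neg at h
          exact hsub fun x hx => Finset.mem_singleton.mpr (h x hx)
        set w' : ℤ →₀ M := lAct a b E F H (AVB.D 0) w - (a + (j : ℂ)) • w with hw'def
        have hw'U : w' ∈ U := U.sub_mem (hU _ _ hw) (U.smul_mem _ hw)
        have hw'app : ∀ k, w' k = ((k : ℂ) - (j : ℂ)) • w k := by
          intro k
          simp only [hw'def, Finsupp.sub_apply, Finsupp.smul_apply, hD0]
          rw [← sub_smul]
          ring_nf
        have hsupp : w'.support ⊆ w.support.erase j := by
          intro k hk
          rw [Finset.mem_erase]
          refine ⟨?_, ?_⟩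
          · rintro rfl
            apply Finsupp.mem_support_iff.mp hk
            rw [hw'app, sub_self, zero_smul]
          · rw [Finsupp.mem_support_iff] at hk ⊢
            intro h0
            exact hk (by rw [hw'app, h0, smul_zero])
        have hcard : w'.support.card ≤ n := by
          have h1 := Finset.card_le_card hsupp
          rw [Finset.card_erase_of_mem hjs] at h1
          omega
        have hkey := ih w' hw'U hcard i
        rw [hw'app] at hkey
        have hne : ((i : ℂ) - (j : ℂ)) ≠ 0 := by
          rw [sub_ne_zero]
          exact_mod_cast (Ne.symm hji)
        have heq : Finsupp.single i (w i)
            = ((i : ℂ) - (j : ℂ))⁻¹ • Finsupp.single i (((i : ℂ) - (j : ℂ)) • w i) := by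
          rw [Finsupp.smul_single, smul_smul, inv_mul_cancel₀ hne, one_smul]
        rw [heq]
        exact U.smul_mem _ hkey
  -- action on single vectors
  have hEact : ∀ (m i : ℤ) (u : M),
      lAct a b E F H (AVB.E m) (Finsupp.single i u) = Finsupp.single (m + i) (E u) := by
    intro m i u
    simp only [lAct]
    rw [Finsupp.sum_single_index (by simp)]
  have hFact : ∀ (m i : ℤ) (u : M),
      lAct a b E F H (AVB.F m) (Finsupp.single i u) = Finsupp.single (m + i) (F u) := by
    intro m i u
    simp only [lAct]
    rw [Finsupp.sum_single_index (by simp)]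
  have hHact : ∀ (m i : ℤ) (u : M),
      lAct a b E F H (AVB.H m) (Finsupp.single i u) = Finsupp.single (m + i) (H u) := by
    intro m i u
    simp only [lAct]
    rw [Finsupp.sum_single_index (by simp)]
  -- the submodules W i
  set W : ℤ → Submodule ℂ M := fun i => U.comap (Finsupp.lsingle i) with hWdef
  have hWmem : ∀ (i : ℤ) (u : M), u ∈ W i ↔ Finsupp.single i u ∈ U := by
    intro i u
    simp [hWdef, Submodule.mem_comap, Finsupp.lsingle_apply]
  -- a nonzero component
  obtain ⟨w, hwU, hwne⟩ := Submodule.exists_mem_ne_zero_of_ne_bot hbot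
  obtain ⟨i0, hi0⟩ : ∃ i, w i ≠ 0 := by
    by_contra h
    push_neg at h
    exact hwne (Finsupp.ext h)
  have hu0 : (w i0) ∈ W i0 := (hWmem i0 (w i0)).mpr (comp _ w hwU le_rfl i0)
  -- W i0 is an sl₂-submodule, hence ⊤
  have hWi0inv : ∀ u ∈ W i0, E u ∈ W i0 ∧ F u ∈ W i0 ∧ H u ∈ W i0 := by
    intro u hu
    rw [hWmem] at hu
    refine ⟨?_, ?_, ?_⟩
    · rw [hWmem]
      have := hU (AVB.E 0) _ hu
      rwa [hEact, zero_add] at this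
    · rw [hWmem]
      have := hU (AVB.F 0) _ hu
      rwa [hFact, zero_add] at this
    · rw [hWmem]
      have := hU (AVB.H 0) _ hu
      rwa [hHact, zero_add] at this
  have hWi0top : W i0 = ⊤ := by
    rcases hirr (W i0) hWi0inv with h | h
    · exact absurd (h ▸ hu0) (by simpa using hi0)
    · exact h
  -- range E ⊔ range F ⊔ range H = ⊤
  set S : Submodule ℂ M := LinearMap.range E ⊔ LinearMap.range F ⊔ LinearMap.range H
    with hSdef
  have hStop : S = ⊤ := by
    rcases hirr S (fun u _ => ⟨Submodule.mem_sup_left (Submodule.mem_sup_left ⟨u, rfl⟩),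
        Submodule.mem_sup_left (Submodule.mem_sup_right ⟨u, rfl⟩),
        Submodule.mem_sup_right ⟨u, rfl⟩⟩) with h | h
    · exfalso
      have hE0 : ∀ u : M, E u = 0 := fun u =>
        (Submodule.mem_bot ℂ).mp (h ▸ (Submodule.mem_sup_left (Submodule.mem_sup_left ⟨u, rfl⟩) : E u ∈ S))
      have hF0 : ∀ u : M, F u = 0 := fun u =>
        (Submodule.mem_bot ℂ).mp (h ▸ (Submodule.mem_sup_left (Submodule.mem_sup_right ⟨u, rfl⟩) : F u ∈ S))
      have hH0 : ∀ u : M, H u = 0 := fun u =>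
        (Submodule.mem_bot ℂ).mp (h ▸ (Submodule.mem_sup_right (⟨u, rfl⟩ : H u ∈ LinearMap.range H) : H u ∈ S))
      have : Nontrivial M := Module.nontrivial_of_finrank_pos (R := ℂ) (by omega)
      obtain ⟨u, hu⟩ := exists_ne (0 : M)
      rcases hirr (ℂ ∙ u) (fun v _ => by
        simp [hE0, hF0, hH0, Submodule.zero_mem]) with h1 | h1
      · exact hu ((Submodule.mem_bot ℂ).mp (h1 ▸ Submodule.mem_span_singleton_self u))
      · have h2 : Module.finrank ℂ (ℂ ∙ u) = 1 := finrank_span_singleton hu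
        rw [h1, finrank_top] at h2
        omega
    · exact h
  -- all W j are ⊤
  have hWall : ∀ (j : ℤ) (u : M), Finsupp.single j u ∈ U := by
    intro j u
    have hle : S ≤ W j := by
      have key : ∀ v : M, Finsupp.single j (E v) ∈ U ∧ Finsupp.single j (F v) ∈ U ∧
          Finsupp.single j (H v) ∈ U := by
        intro v
        have hv : Finsupp.single i0 v ∈ U := by
          have : v ∈ W i0 := hWi0top ▸ Submodule.mem_top
          rwa [hWmem] at this
        refine ⟨?_, ?_, ?_⟩
        · have := hU (AVB.E (j - i0)) _ hv
          rwa [hEact, sub_add_cancel] at this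
        · have := hU (AVB.F (j - i0)) _ hv
          rwa [hFact, sub_add_cancel] at this
        · have := hU (AVB.H (j - i0)) _ hv
          rwa [hHact, sub_add_cancel] at this
      refine sup_le (sup_le ?_ ?_) ?_
      · rintro _ ⟨v, rfl⟩
        exact (hWmem j _).mpr (key v).1
      · rintro _ ⟨v, rfl⟩
        exact (hWmem j _).mpr (key v).2.1
      · rintro _ ⟨v, rfl⟩
        exact (hWmem j _).mpr (key v).2.2
    have : u ∈ W j := hle (hStop ▸ Submodule.mem_top)
    rwa [hWmem] at this
  -- conclude
  rw [eq_top_iff]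
  intro w hwtop
  clear hwtop
  induction w using Finsupp.induction with
  | zero => exact U.zero_mem
  | single_add i u f _ _ ih => exact U.add_mem (hWall i u) ih
end
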